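/- Let λ > 0 and for each n let Y_{i,n}, i = 1,...,n-1, be independent exponential random variables with Y_{i,n} of rate iλ. Let c_n = max_{1 ≤ i ≤ n-1} Y_{i,n}. Then for any ε > 0, ∑_{n=2}^∞ P(λ c_n ≥ (1+ε) log n) < ∞, and consequently limsup_{n→∞} λ c_n / log n ≤ 1 almost surely. -/

import Mathlib

open MeasureTheory ProbabilityTheory Real Filter Topology

lemma my_expMeasure_Ici {r t : ℝ} (hr : 0 < r) (ht : 0 ≤ t) :
    expMeasure r (Set.Ici t) = ENNReal.ofReal (Real.exp (-(r * t))) := by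
  have hP := isProbabilityMeasure_expMeasure hr
  have hsing : expMeasure r {t} = 0 := by
    rw [expMeasure, gammaMeasure]
    exact (withDensity_absolutelyContinuous _ _) Real.volume_singleton
  have hIic : expMeasure r (Set.Iic t) = ENNReal.ofReal (1 - Real.exp (-(r * t))) := by
    rw [← ofReal_cdf]
    congr 1
    rw [cdf_expMeasure_eq hr t, if_pos ht]
  have hIio : expMeasure r (Set.Iio t) = ENNReal.ofReal (1 - Real.exp (-(r * t))) := by
    rw [← hIic]
    apply le_antisymm (measure_mono Set.Iio_subset_Iic_self)
    have : expMeasure r (Set.Iic t) = expMeasure r (Set.Iio t ∪ {t}) := by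
      rw [Set.Iio_union_right]
    rw [this]
    exact (measure_union_le _ _).trans (by simp [hsing])
  have hcompl : Set.Ici t = (Set.Iio t)ᶜ := (Set.compl_Iio).symm
  rw [hcompl, measure_compl measurableSet_Iio (measure_ne_top _ _), hIio, measure_univ]
  have he1 : Real.exp (-(r * t)) ≤ 1 := Real.exp_le_one_iff.mpr (by nlinarith)
  rw [← ENNReal.ofReal_one, ← ENNReal.ofReal_sub _ (by nlinarith : (0:ℝ) ≤ 1 - Real.exp (-(r*t)))]
  norm_num

lemma geom_Icc_le {r : ℝ} (hr : 0 ≤ r) (hr2 : r ≤ 1 / 2) (m : ℕ) :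
    ∑ i ∈ Finset.Icc 1 m, r ^ i ≤ 2 * r := by
  have h1 : Finset.Icc 1 m = Finset.Ico 1 (m + 1) := by rw [Finset.Ico_add_one_right_eq_Icc]
  rw [h1]
  have h2 := geom_sum_Ico_le_of_lt_one hr (by linarith : r < 1) (m := 1) (n := m + 1)
  rw [pow_one] at h2
  refine h2.trans ?_
  have h3 : (1:ℝ)/2 ≤ 1 - r := by linarith
  calc r / (1 - r) ≤ r / (1/2) := by
        apply div_le_div_of_nonneg_left hr (by norm_num) h3
    _ = 2 * r := by ring


/-- For the connectivity distance `c_n = max_{1≤i≤n-1} Y_{i,n}` of the exponential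
RGG, where the spacings `Y_{i,n}` are independent exponentials of rate `iλ`:
for every `ε > 0` the series `∑_n P(λ c_n ≥ (1+ε) log n)` converges, and
consequently `limsup_n λ c_n / log n ≤ 1` almost surely. -/
theorem connectivity_distance_limsup_le_one
    {Ω : Type*} [MeasurableSpace Ω] (μ : Measure Ω) [IsProbabilityMeasure μ]
    (lam : ℝ) (hlam : 0 < lam)
    (Y : ℕ → ℕ → Ω → ℝ) (hmeas : ∀ n i, Measurable (Y n i))
    (hindep : ∀ n : ℕ,
      iIndepFun (fun i : Fin (n - 1) => Y n ((i : ℕ) + 1)) μ)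
    (hdist : ∀ n : ℕ, ∀ i ∈ Finset.Icc 1 (n - 1),
      μ.map (Y n i) = expMeasure ((i : ℝ) * lam))
    (c : ℕ → Ω → ℝ)
    (hc : ∀ n : ℕ, ∀ hn : 2 ≤ n, ∀ ω, c n ω =
      (Finset.Icc 1 (n - 1)).sup' (Finset.nonempty_Icc.mpr (by omega))
        (fun i => Y n i ω)) :
    (∀ ε : ℝ, 0 < ε →
      Summable (fun n : ℕ =>
        (μ {ω | (1 + ε) * Real.log n ≤ lam * c n ω}).toReal)) ∧
    ∀ᵐ ω ∂μ, Filter.limsup (fun n : ℕ => lam * c n ω / Real.log n) atTop ≤ 1 := by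

  -- Key pointwise bound
  have key : ∀ ε : ℝ, 0 < ε → ∀ n : ℕ, 2 ≤ n →
      (μ {ω | (1 + ε) * Real.log n ≤ lam * c n ω}).toReal ≤ 2 * (n : ℝ) ^ (-(1 + ε)) := by
    intro ε hε n hn
    have hn1 : (1:ℝ) < n := by exact_mod_cast (by omega : 1 < n)
    have hnpos : (0:ℝ) < n := by linarith
    set y := (1 + ε) * Real.log n with hy_def
    have hy : 0 < y := mul_pos (by linarith) (Real.log_pos hn1)
    set r := Real.exp (-y) with hr_def
    have hrpos : 0 < r := Real.exp_pos _
    have hr1 : r = (n : ℝ) ^ (-(1 + ε)) := by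
      rw [Real.rpow_def_of_pos hnpos, hr_def, hy_def]
      congr 1
      ring
    have hr2 : r ≤ 1 / 2 := by
      rw [hr1]
      calc (n:ℝ) ^ (-(1+ε)) ≤ (2:ℝ) ^ (-(1+ε)) := by
            apply Real.rpow_le_rpow_of_nonpos (by norm_num) (by exact_mod_cast hn) (by linarith)
        _ ≤ (2:ℝ) ^ (-1 : ℝ) := by
            apply Real.rpow_le_rpow_of_exponent_le (by norm_num) (by linarith)
        _ = 1 / 2 := by
            rw [Real.rpow_neg_one]; norm_num
    -- inclusion in union
    have hsub : {ω | y ≤ lam * c n ω} ⊆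
        ⋃ i ∈ Finset.Icc 1 (n - 1), {ω | y / lam ≤ Y n i ω} := by
      intro ω hω
      have h1 : y / lam ≤ c n ω := by
        rw [div_le_iff₀ hlam, mul_comm]
        exact hω
      rw [hc n hn ω] at h1
      obtain ⟨i, hi, hle⟩ := (Finset.le_sup'_iff _).mp h1
      exact Set.mem_biUnion hi hle
    -- measure of each union member
    have hμi : ∀ i ∈ Finset.Icc 1 (n - 1),
        μ {ω | y / lam ≤ Y n i ω} = ENNReal.ofReal (r ^ i) := by
      intro i hi
      have hi1 : 1 ≤ i := (Finset.mem_Icc.mp hi).1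
      have hipos : (0:ℝ) < i := by exact_mod_cast hi1
      have hset : {ω | y / lam ≤ Y n i ω} = Y n i ⁻¹' Set.Ici (y / lam) := rfl
      rw [hset, ← Measure.map_apply (hmeas n i) measurableSet_Ici, hdist n i hi,
        my_expMeasure_Ici (mul_pos hipos hlam) (by positivity)]
      congr 1
      have harg : (i:ℝ) * lam * (y / lam) = (i:ℝ) * y := by
        field_simp
      rw [harg, hr_def, ← Real.exp_nat_mul]
      congr 1
      ring
    -- put it together
    have hfin : (∑ i ∈ Finset.Icc 1 (n-1), ENNReal.ofReal (r ^ i)) ≠ ⊤ :=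
      (ENNReal.sum_lt_top.mpr fun i _ => ENNReal.ofReal_lt_top).ne
    calc (μ {ω | y ≤ lam * c n ω}).toReal
        ≤ (∑ i ∈ Finset.Icc 1 (n-1), ENNReal.ofReal (r ^ i)).toReal := by
          apply ENNReal.toReal_mono hfin
          refine (measure_mono hsub).trans ?_
          refine (measure_biUnion_finset_le _ _).trans (le_of_eq ?_)
          exact Finset.sum_congr rfl hμi
      _ = ∑ i ∈ Finset.Icc 1 (n-1), r ^ i := by
          rw [ENNReal.toReal_sum fun i _ => ENNReal.ofReal_ne_top]
          refine Finset.sum_congr rfl fun i _ => ?_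
          exact ENNReal.toReal_ofReal (by positivity)
      _ ≤ 2 * r := geom_Icc_le hrpos.le hr2 _
      _ = 2 * (n:ℝ) ^ (-(1+ε)) := by rw [hr1]
  -- Summability
  have hsummable : ∀ ε : ℝ, 0 < ε →
      Summable (fun n : ℕ => (μ {ω | (1 + ε) * Real.log n ≤ lam * c n ω}).toReal) := by
    intro ε hε
    have h2 : Summable (fun n : ℕ => 2 * (n:ℝ) ^ (-(1+ε))) :=
      (Real.summable_nat_rpow.mpr (by linarith)).mul_left 2
    rw [← summable_nat_add_iff 2]
    refine Summable.of_nonneg_of_le (fun n => ENNReal.toReal_nonneg)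
      (fun n => key ε hε (n+2) (by omega)) ?_
    exact (summable_nat_add_iff 2).mpr h2
  refine ⟨hsummable, ?_⟩
  -- Borel-Cantelli
  have hBC : ∀ ε : ℝ, 0 < ε →
      ∀ᵐ ω ∂μ, ∀ᶠ n : ℕ in atTop, lam * c n ω < (1 + ε) * Real.log n := by
    intro ε hε
    have hsum : (∑' n : ℕ, μ {ω | (1 + ε) * Real.log n ≤ lam * c n ω}) ≠ ⊤ := by
      have hs := hsummable ε hε
      have heq : (∑' n : ℕ, μ {ω | (1 + ε) * Real.log n ≤ lam * c n ω})
          = ENNReal.ofReal (∑' n : ℕ, (μ {ω | (1 + ε) * Real.log n ≤ lam * c n ω}).toReal) := by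
        rw [ENNReal.ofReal_tsum_of_nonneg (fun n => ENNReal.toReal_nonneg) hs]
        exact tsum_congr fun n => (ENNReal.ofReal_toReal (measure_ne_top μ _)).symm
      rw [heq]
      exact ENNReal.ofReal_ne_top
    filter_upwards [ae_eventually_notMem hsum] with ω hω
    exact hω.mono fun n hn => not_le.mp hn
  have hmain : ∀ᵐ ω ∂μ, ∀ k : ℕ,
      ∀ᶠ n : ℕ in atTop, lam * c n ω < (1 + 1/((k:ℝ)+1)) * Real.log n :=
    ae_all_iff.mpr fun k => hBC (1/((k:ℝ)+1)) (by positivity)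
  filter_upwards [hmain] with ω hω
  have hub : ∀ k : ℕ, ∀ᶠ n : ℕ in atTop,
      lam * c n ω / Real.log n ≤ 1 + 1/((k:ℝ)+1) := by
    intro k
    filter_upwards [hω k, eventually_ge_atTop 2] with n h1 h2
    have hlog : 0 < Real.log n := Real.log_pos (by exact_mod_cast (by omega : 1 < n))
    rw [div_le_iff₀ hlog]
    linarith [h1]
  rw [Filter.limsup_eq]
  by_cases hbdd : BddBelow {a : ℝ | ∀ᶠ n : ℕ in atTop, lam * c n ω / Real.log n ≤ a}
  · by_contra hcon
    push_neg at hcon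
    obtain ⟨k, hk⟩ := exists_nat_one_div_lt (by linarith :
      (0:ℝ) < sInf {a : ℝ | ∀ᶠ n : ℕ in atTop, lam * c n ω / Real.log n ≤ a} - 1)
    have := csInf_le hbdd (hub k)
    push_cast at hk
    linarith
  · rw [Real.sInf_of_not_bddBelow hbdd]
    norm_num
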